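/- The defect of the lattice Vₙ (the form Lₙ on ℤ⁴ⁿ) satisfies ⌊n/3⌋ ≤ d(Vₙ) < n/2 for all n ≥ 1; in particular there is a characteristic vector of norm 4n − 8⌊n/3⌋, and every characteristic vector has positive norm since the form is odd. -/

import Mathlib

noncomputable section

/-- `Λₙ = ℤ[x]/(xⁿ−1)`, realized as the group ring `ℤ[ℤ/n]`. -/
abbrev Lam (n : ℕ) := AddMonoidAlgebra ℤ (ZMod n)

/-- The monomial `x^d` in `Λₙ`. -/
def Xp (n : ℕ) (d : ℤ) : Lam n := AddMonoidAlgebra.single ((d : ZMod n)) 1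

/-- The element `t = x + x⁻¹` of `Λₙ`. -/
def tn (n : ℕ) : Lam n := Xp n 1 + Xp n (-1)

/-- The matrix `L` over `Λₙ`, obtained by substituting `t = x + x⁻¹`. -/
def Lmat (n : ℕ) : Matrix (Fin 4) (Fin 4) (Lam n) :=
  !![1 + tn n + tn n ^ 2, tn n + tn n ^ 2, 1 + tn n, tn n;
     tn n + tn n ^ 2, 1 + tn n + tn n ^ 2, tn n, 1 + tn n;
     1 + tn n, tn n, 2, 0;
     tn n, 1 + tn n, 0, 2]

/-- The involution of `Λₙ` sending `x` to `x⁻¹`. -/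
def conj (n : ℕ) (f : Lam n) : Lam n := AddMonoidAlgebra.ofCoeff (Finsupp.mapDomain (fun a => -a) f.coeff)

/-- The `Λₙ`-valued hermitian form on `Λₙ⁴` given by the matrix `L`. -/
def herm (n : ℕ) (v w : Fin 4 → Lam n) : Lam n :=
  ∑ i, ∑ j, conj n (v i) * Lmat n i j * w j

/-- The `ℤ`-valued symmetric bilinear form `Lₙ` on `Λₙ⁴ ≅ ℤ⁴ⁿ`:
the coefficient of the identity (`x⁰`) of the `Λₙ`-valued hermitian form. -/
def Ln (n : ℕ) (v w : Fin 4 → Lam n) : ℤ := (herm n v w).coeff 0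

/-- The norm element `N = 1 + x + ⋯ + xⁿ⁻¹` of `Λₙ`. -/
def Nn (n : ℕ) : Lam n := ∑ d ∈ Finset.range n, AddMonoidAlgebra.single ((d : ZMod n)) (1 : ℤ)

/-- The standard `Λₙ`-basis vectors `e₁, e₂, e₃, e₄` of `Λₙ⁴`. -/
def ee (n : ℕ) (i : Fin 4) : Fin 4 → Lam n := Pi.single i 1

/-- `w` is a characteristic vector for `Lₙ`. -/
def IsChar (n : ℕ) (w : Fin 4 → Lam n) : Prop :=
  ∀ v : Fin 4 → Lam n, (2 : ℤ) ∣ Ln n w v - Ln n v v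

instance (n : ℕ) : CoeFun (Lam n) (fun _ => ZMod n → ℤ) := ⟨fun f => f.coeff⟩

namespace Aux
variable {n : ℕ}

def cj (n : ℕ) : Lam n →+* Lam n :=
  AddMonoidAlgebra.mapDomainRingHom ℤ (negAddMonoidHom (α := ZMod n))

lemma conj_eq (f : Lam n) : conj n f = cj n f := rfl

lemma conj_add (f g : Lam n) : conj n (f + g) = conj n f + conj n g := by
  simp [conj_eq, map_add]

lemma conj_mul (f g : Lam n) : conj n (f * g) = conj n f * conj n g := by
  simp [conj_eq, map_mul]

lemma conj_one : conj n 1 = 1 := by simp [conj_eq, map_one]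

lemma conj_two : conj n 2 = 2 := by rw [conj_eq]; exact map_ofNat (cj n) 2

lemma conj_neg (f : Lam n) : conj n (-f) = -conj n f := by simp [conj_eq]

lemma conj_single (a : ZMod n) (c : ℤ) :
    conj n (AddMonoidAlgebra.single a c) = AddMonoidAlgebra.single (-a) c :=
  congrArg AddMonoidAlgebra.ofCoeff Finsupp.mapDomain_single

lemma conj_Xp (d : ℤ) : conj n (Xp n d) = Xp n (-d) := by
  simp [Xp, conj_single]

lemma conj_t : conj n (tn n) = tn n := by
  rw [tn, conj_add, conj_Xp, conj_Xp]; simp [add_comm]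

lemma conj_conj (f : Lam n) : conj n (conj n f) = f := by
  unfold conj
  rw [AddMonoidAlgebra.coeff_ofCoeff, ← Finsupp.mapDomain_comp]
  simp [Function.comp_def]

lemma conj_apply (f : Lam n) (a : ZMod n) : conj n f a = f (-a) := by
  conv_lhs => rw [show a = -(-a) by ring]
  exact Finsupp.mapDomain_apply neg_injective f.coeff (-a)

lemma conj_zero : conj n 0 = 0 := by simp [conj_eq]

lemma Xp_mul (a b : ℤ) : Xp n a * Xp n b = Xp n (a + b) := by
  simp [Xp, AddMonoidAlgebra.single_mul_single]

lemma Xp_zero : Xp n 0 = 1 := by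
  simp [Xp]; rfl

lemma tsq : tn n ^ 2 = Xp n 2 + 2 + Xp n (-2) := by
  rw [sq, tn, add_mul, mul_add, mul_add, Xp_mul, Xp_mul, Xp_mul, Xp_mul]
  norm_num [Xp_zero]
  ring

end Aux
namespace Aux
variable {n : ℕ} [NeZero n]

def ip (f g : Lam n) : ℤ := ∑ a : ZMod n, f a * g a

lemma eq_sum_univ (f : Lam n) : f = ∑ a : ZMod n, AddMonoidAlgebra.single a (f a) :=
  AddMonoidAlgebra.coeff_injective (by rw [AddMonoidAlgebra.coeff_sum]; exact (Finsupp.univ_sum_single f.coeff).symm)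

lemma ladd (f g : Lam n) (a : ZMod n) : (f + g) a = f a + g a := rfl
lemma lneg (f : Lam n) (a : ZMod n) : (-f) a = -(f a) := rfl
lemma lzero (a : ZMod n) : (0 : Lam n) a = 0 := rfl

lemma ipc (f g : Lam n) : (conj n f * g) 0 = ip f g := by
  conv_lhs => rw [eq_sum_univ f]
  rw [conj_eq, map_sum, Finset.sum_mul, AddMonoidAlgebra.coeff_sum, Finsupp.finset_sum_apply]
  refine Finset.sum_congr rfl fun a _ => ?_
  rw [← conj_eq, conj_single, AddMonoidAlgebra.coeff_single_mul_apply]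
  simp

lemma c0_conj (f : Lam n) : conj n f 0 = f 0 := by rw [conj_apply, neg_zero]

lemma ip_swap (c f g : Lam n) (hc : conj n c = c) : ip f (c * g) = ip g (c * f) := by
  rw [← ipc, ← ipc]
  have h : conj n (conj n f * (c * g)) = conj n g * (c * f) := by
    rw [conj_mul, conj_mul, conj_conj, hc]; ring
  rw [← c0_conj (conj n f * (c * g)), h]

lemma ip_addR (f g h : Lam n) : ip f (g + h) = ip f g + ip f h := by
  simp [ip, ladd, mul_add, Finset.sum_add_distrib]

lemma ip_negR (f g : Lam n) : ip f (-g) = -ip f g := by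
  simp [ip, lneg]

lemma ip_negL (f g : Lam n) : ip (-f) g = -ip f g := by
  simp [ip, lneg]

lemma two_mul_apply (f : Lam n) (a : ZMod n) : ((2 : Lam n) * f) a = 2 * f a := by
  rw [two_mul, ladd]; ring

lemma ip_twoR (f g : Lam n) : ip f ((2 : Lam n) * g) = 2 * ip f g := by
  simp only [ip, two_mul_apply, Finset.mul_sum]
  exact Finset.sum_congr rfl fun a _ => by ring

lemma ip_twoL (f g : Lam n) : ip ((2 : Lam n) * f) g = 2 * ip f g := by
  simp only [ip, two_mul_apply, Finset.mul_sum]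
  exact Finset.sum_congr rfl fun a _ => by ring

lemma ip_zeroL (g : Lam n) : ip 0 g = 0 := by simp [ip]

lemma ip_zeroR (f : Lam n) : ip f 0 = 0 := by simp [ip]

lemma Nn_eq : Nn n = ∑ a : ZMod n, AddMonoidAlgebra.single a (1 : ℤ) := by
  rw [Nn]
  refine Finset.sum_nbij' (i := fun d => (d : ZMod n)) (j := fun a => a.val)
    (fun d _ => Finset.mem_univ _)
    (fun a _ => Finset.mem_range.mpr (ZMod.val_lt a))
    (fun d hd => ZMod.val_cast_of_lt (Finset.mem_range.mp hd))
    (fun a _ => ZMod.natCast_rightInverse a)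
    (fun d _ => rfl)

lemma N_apply (a : ZMod n) : Nn n a = 1 := by
  rw [Nn_eq, AddMonoidAlgebra.coeff_sum, Finsupp.finset_sum_apply]
  simp [Finsupp.single_apply]

def eps (f : Lam n) : ℤ := ∑ a : ZMod n, f a

lemma ipN (g : Lam n) : ip (Nn n) g = eps g := by
  simp [ip, eps, N_apply]

lemma eps_X_mul (d : ℤ) (g : Lam n) : eps (Xp n d * g) = eps g := by
  simp only [eps, Xp, AddMonoidAlgebra.coeff_single_mul_apply, one_mul]
  exact Fintype.sum_equiv (Equiv.addLeft (-(d : ZMod n))) _ _ (fun a => rfl)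

lemma X_mul_N (d : ℤ) : Xp n d * Nn n = Nn n := by
  rw [Nn_eq, Finset.mul_sum]
  simp only [Xp, AddMonoidAlgebra.single_mul_single, one_mul]
  exact Fintype.sum_equiv (Equiv.addLeft ((d : ZMod n))) _ _ (fun a => rfl)

lemma eps_N : eps (Nn n) = n := by
  simp [eps, N_apply, ZMod.card]

end Aux
def sel (n : ℕ) : Lam n := ∑ j ∈ Finset.range (n / 3), Xp n (3 * (j : ℤ))
namespace Aux
variable {n : ℕ} [NeZero n]

lemma sel_apply (a : ZMod n) :
    sel n a = ∑ j ∈ Finset.range (n / 3), (if ((3 * (j : ℤ) : ℤ) : ZMod n) = a then 1 else 0) := by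
  rw [sel, AddMonoidAlgebra.coeff_sum, Finsupp.finset_sum_apply]
  exact Finset.sum_congr rfl fun j _ => by rw [Xp, AddMonoidAlgebra.coeff_single, Finsupp.single_apply]

lemma key {j k : ℕ} (d : ℤ) (hd : d.natAbs ≤ 2) (hj : j < n / 3) (hk : k < n / 3)
    (h : ((3 * (j : ℤ) : ℤ) : ZMod n) = ((3 * (k : ℤ) : ℤ) : ZMod n) + (d : ZMod n)) :
    j = k ∧ d = 0 := by
  have h3 : 3 * (n / 3) ≤ n := by omega
  have hz : ((3 * (j : ℤ) - 3 * (k : ℤ) - d : ℤ) : ZMod n) = 0 := by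
    push_cast
    push_cast at h
    linear_combination h
  rw [ZMod.intCast_zmod_eq_zero_iff_dvd] at hz
  have h0 : (3 * (j : ℤ) - 3 * (k : ℤ) - d : ℤ) = 0 := by
    refine Int.eq_zero_of_abs_lt_dvd hz ?_
    rw [abs_lt]
    omega
  omega

lemma ip_s_shift (d : ℤ) (hd : d.natAbs ≤ 2) :
    ip (sel n) (Xp n d * sel n) = if d = 0 then ((n / 3 : ℕ) : ℤ) else 0 := by
  have expand : ∀ a : ZMod n, (Xp n d * sel n) a
      = ∑ k ∈ Finset.range (n / 3), (if ((3 * (k : ℤ) : ℤ) : ZMod n) = -(d : ZMod n) + a then 1 else 0) := by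
    intro a
    rw [Xp, AddMonoidAlgebra.coeff_single_mul_apply, one_mul, sel_apply]
  unfold ip
  simp only [expand, sel_apply, Finset.sum_mul_sum]
  rw [Finset.sum_comm]
  have inner : ∀ j ∈ Finset.range (n / 3),
      (∑ a : ZMod n, ∑ k ∈ Finset.range (n / 3),
        (if ((3 * (j : ℤ) : ℤ) : ZMod n) = a then 1 else 0) *
          (if ((3 * (k : ℤ) : ℤ) : ZMod n) = -(d : ZMod n) + a then (1:ℤ) else 0))
      = ∑ k ∈ Finset.range (n / 3), (if j = k ∧ d = 0 then 1 else 0) := by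
    intro j hj
    rw [Finset.sum_comm]
    refine Finset.sum_congr rfl fun k hk => ?_
    rw [Finset.sum_eq_single (((3 * (j : ℤ) : ℤ) : ZMod n))]
    · rw [if_pos rfl, one_mul]
      by_cases hcond : ((3 * (k : ℤ) : ℤ) : ZMod n) = -(d : ZMod n) + (((3 * (j : ℤ)) : ℤ) : ZMod n)
      · rw [if_pos hcond, if_pos]
        have hk2 := key d hd (Finset.mem_range.mp hj) (Finset.mem_range.mp hk)
          (by push_cast; push_cast at hcond; linear_combination -hcond)
        exact hk2
      · rw [if_neg hcond, if_neg]
        rintro ⟨rfl, rfl⟩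
        apply hcond
        simp
    · intro b _ hb
      rw [if_neg (fun hc => hb hc.symm), zero_mul]
    · intro hmem
      exact absurd (Finset.mem_univ _) hmem
  rw [Finset.sum_congr rfl inner]
  by_cases hd0 : d = 0
  · subst hd0
    simp only [and_true, eq_self_iff_true, if_true]
    have : ∀ j ∈ Finset.range (n / 3),
        (∑ k ∈ Finset.range (n / 3), if j = k then (1:ℤ) else 0) = 1 := by
      intro j hj
      rw [Finset.sum_ite_eq, if_pos hj]
    rw [Finset.sum_congr rfl this, Finset.sum_const, Finset.card_range]
    simp
  · simp [hd0]

lemma ip_s_s : ip (sel n) (sel n) = ((n / 3 : ℕ) : ℤ) := by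
  have := ip_s_shift (n := n) 0 (by norm_num)
  rw [if_pos rfl] at this
  rw [← this, Xp_zero, one_mul]

lemma ip_s_N : ip (sel n) (Nn n) = ((n / 3 : ℕ) : ℤ) := by
  unfold ip
  simp only [N_apply, mul_one, sel_apply]
  rw [Finset.sum_comm]
  have : ∀ j ∈ Finset.range (n / 3),
      (∑ a : ZMod n, if ((3 * (j : ℤ) : ℤ) : ZMod n) = a then (1:ℤ) else 0) = 1 := by
    intro j _
    rw [Finset.sum_ite_eq, if_pos (Finset.mem_univ _)]
  rw [Finset.sum_congr rfl this, Finset.sum_const, Finset.card_range]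
  simp

lemma eps_s : eps (sel n) = ((n / 3 : ℕ) : ℤ) := by
  rw [← ipN]
  rw [show ip (Nn n) (sel n) = ip (sel n) (Nn n) from by unfold ip; exact Finset.sum_congr rfl fun a _ => mul_comm _ _]
  exact ip_s_N

end Aux
namespace Aux
variable {n : ℕ} [NeZero n]

lemma Ln_eq (w v : Fin 4 → Lam n) :
    Ln n w v = ∑ i, ∑ j, ip (w i) (Lmat n i j * v j) := by
  unfold Ln herm
  rw [AddMonoidAlgebra.coeff_sum, Finsupp.finset_sum_apply]
  refine Finset.sum_congr rfl fun i _ => ?_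
  rw [AddMonoidAlgebra.coeff_sum, Finsupp.finset_sum_apply]
  refine Finset.sum_congr rfl fun j _ => ?_
  rw [mul_assoc, ipc]

example : Lmat n 0 0 = 1 + tn n + tn n ^ 2 := rfl
example : Lmat n 2 3 = 0 := rfl
example : Lmat n 3 1 = 1 + tn n := rfl

lemma ip_shift_symm (f : Lam n) (d : ℤ) : ip f (Xp n (-d) * f) = ip f (Xp n d * f) := by
  unfold ip
  simp only [Xp, AddMonoidAlgebra.coeff_single_mul_apply, one_mul]
  refine Fintype.sum_equiv (Equiv.addLeft ((d : ZMod n))) _ _ fun a => ?_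
  simp only [Equiv.coe_addLeft]
  push_cast
  rw [neg_neg]
  rw [show -(d:ZMod n) + ((d:ZMod n) + a) = a by ring]
  ring

lemma ip_X_even (f : Lam n) (d : ℤ) : 2 ∣ ip f (Xp n d * f) + ip f (Xp n (-d) * f) := by
  rw [ip_shift_symm]
  exact ⟨ip f (Xp n d * f), by ring⟩

lemma ip_self_parity (f : Lam n) : 2 ∣ ip f f - eps f := by
  rw [ip, eps, ← Finset.sum_sub_distrib]
  refine Finset.dvd_sum fun a _ => ?_
  obtain ⟨c, hc⟩ := Int.even_mul_succ_self (f a - 1)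
  exact ⟨c, by linear_combination hc⟩

lemma diag_parity (f : Lam n) : 2 ∣ ip f ((1 + tn n + tn n ^ 2) * f) - eps f := by
  have e1 : (1 + tn n + tn n ^ 2) * f
      = f + (Xp n 1 * f + Xp n (-1) * f) + (Xp n 2 * f + (2:Lam n) * f + Xp n (-2) * f) := by
    rw [tsq, tn]; ring
  rw [e1, ip_addR, ip_addR, ip_addR, ip_addR, ip_addR, ip_twoR]
  have h1 := ip_X_even f 1
  have h2 := ip_X_even f 2
  have h0 := ip_self_parity f
  omega

lemma conj_onet : conj n (1 + tn n) = 1 + tn n := by rw [conj_add, conj_one, conj_t]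
lemma conj_tt : conj n (tn n + tn n ^ 2) = tn n + tn n ^ 2 := by
  rw [conj_add, sq, conj_mul, conj_t]
lemma conj_u : conj n (1 + tn n + tn n ^ 2) = 1 + tn n + tn n ^ 2 := by
  rw [conj_add, conj_add, conj_one, sq, conj_mul, conj_t]

lemma Ln_diag_mod (v : Fin 4 → Lam n) : 2 ∣ Ln n v v - (eps (v 0) + eps (v 1)) := by
  rw [Ln_eq]
  simp only [Fin.sum_univ_four]
  rw [show (Lmat n 0 0 : Lam n) = 1 + tn n + tn n ^ 2 from rfl,
    show (Lmat n 0 1 : Lam n) = tn n + tn n ^ 2 from rfl,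
    show (Lmat n 0 2 : Lam n) = 1 + tn n from rfl,
    show (Lmat n 0 3 : Lam n) = tn n from rfl,
    show (Lmat n 1 0 : Lam n) = tn n + tn n ^ 2 from rfl,
    show (Lmat n 1 1 : Lam n) = 1 + tn n + tn n ^ 2 from rfl,
    show (Lmat n 1 2 : Lam n) = tn n from rfl,
    show (Lmat n 1 3 : Lam n) = 1 + tn n from rfl,
    show (Lmat n 2 0 : Lam n) = 1 + tn n from rfl,
    show (Lmat n 2 1 : Lam n) = tn n from rfl,
    show (Lmat n 2 2 : Lam n) = 2 from rfl,
    show (Lmat n 2 3 : Lam n) = 0 from rfl,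
    show (Lmat n 3 0 : Lam n) = tn n from rfl,
    show (Lmat n 3 1 : Lam n) = 1 + tn n from rfl,
    show (Lmat n 3 2 : Lam n) = 0 from rfl,
    show (Lmat n 3 3 : Lam n) = 2 from rfl]
  have s10 : ip (v 1) ((tn n + tn n ^ 2) * v 0) = ip (v 0) ((tn n + tn n ^ 2) * v 1) :=
    ip_swap _ _ _ conj_tt
  have s20 : ip (v 2) ((1 + tn n) * v 0) = ip (v 0) ((1 + tn n) * v 2) :=
    ip_swap _ _ _ conj_onet
  have s30 : ip (v 3) (tn n * v 0) = ip (v 0) (tn n * v 3) := ip_swap _ _ _ conj_t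
  have s21 : ip (v 2) (tn n * v 1) = ip (v 1) (tn n * v 2) := ip_swap _ _ _ conj_t
  have s31 : ip (v 3) ((1 + tn n) * v 1) = ip (v 1) ((1 + tn n) * v 3) :=
    ip_swap _ _ _ conj_onet
  rw [s10, s20, s30, s21, s31, zero_mul, zero_mul, ip_zeroR, ip_zeroR, ip_twoR, ip_twoR]
  have d0 := diag_parity (v 0)
  have d1 := diag_parity (v 1)
  omega

end Aux
def w0 (n : ℕ) : Fin 4 → Lam n := ![-((2:Lam n) * sel n), 0, Nn n, Nn n]
namespace Aux
variable {n : ℕ} [NeZero n]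

lemma ip_N_shift (d : ℤ) (g : Lam n) : ip (Nn n) (Xp n d * g) = eps g := by
  rw [ipN, eps_X_mul]

lemma onet_mul (g : Lam n) : (1 + tn n) * g = g + (Xp n 1 * g + Xp n (-1) * g) := by
  rw [tn]; ring

lemma t_mul (g : Lam n) : tn n * g = Xp n 1 * g + Xp n (-1) * g := by rw [tn]; ring

lemma ipN_onet (g : Lam n) : ip (Nn n) ((1 + tn n) * g) = 3 * eps g := by
  rw [onet_mul, ip_addR, ip_addR, ipN, ip_N_shift, ip_N_shift]; ring

lemma ipN_t (g : Lam n) : ip (Nn n) (tn n * g) = 2 * eps g := by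
  rw [t_mul, ip_addR, ip_N_shift, ip_N_shift]; ring

lemma Ln_w0_mod (v : Fin 4 → Lam n) : 2 ∣ Ln n (w0 n) v - (eps (v 0) + eps (v 1)) := by
  rw [Ln_eq]
  simp only [Fin.sum_univ_four]
  rw [show (w0 n 0 : Lam n) = -((2:Lam n) * sel n) from rfl,
    show (w0 n 1 : Lam n) = 0 from rfl,
    show (w0 n 2 : Lam n) = Nn n from rfl,
    show (w0 n 3 : Lam n) = Nn n from rfl]
  simp only [ip_negL, ip_twoL, ip_zeroL]
  rw [show (Lmat n 2 0 : Lam n) = 1 + tn n from rfl,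
    show (Lmat n 2 1 : Lam n) = tn n from rfl,
    show (Lmat n 2 2 : Lam n) = 2 from rfl,
    show (Lmat n 2 3 : Lam n) = 0 from rfl,
    show (Lmat n 3 0 : Lam n) = tn n from rfl,
    show (Lmat n 3 1 : Lam n) = 1 + tn n from rfl,
    show (Lmat n 3 2 : Lam n) = 0 from rfl,
    show (Lmat n 3 3 : Lam n) = 2 from rfl]
  simp only [zero_mul, ip_zeroR, ipN_onet, ipN_t, ip_twoR]
  omega

lemma isChar_w0 : IsChar n (w0 n) := by
  intro v
  have h1 := Ln_w0_mod (n := n) v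
  have h2 := Ln_diag_mod (n := n) v
  omega

lemma ip_s_X_s_ne (d : ℤ) (hd : d.natAbs ≤ 2) (h0 : d ≠ 0) :
    ip (sel n) (Xp n d * sel n) = 0 := by
  rw [ip_s_shift d hd, if_neg h0]

lemma Ln_w0_w0 : Ln n (w0 n) (w0 n) = 4 * (n : ℤ) - 8 * ((n / 3 : ℕ) : ℤ) := by
  set m : ℤ := ((n / 3 : ℕ) : ℤ) with hm
  rw [Ln_eq]
  simp only [Fin.sum_univ_four]
  rw [show (w0 n 0 : Lam n) = -((2:Lam n) * sel n) from rfl,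
    show (w0 n 1 : Lam n) = 0 from rfl,
    show (w0 n 2 : Lam n) = Nn n from rfl,
    show (w0 n 3 : Lam n) = Nn n from rfl]
  simp only [ip_negL, ip_twoL, ip_zeroL, mul_zero, ip_zeroR]
  rw [show (Lmat n 0 0 : Lam n) = 1 + tn n + tn n ^ 2 from rfl,
    show (Lmat n 0 2 : Lam n) = 1 + tn n from rfl,
    show (Lmat n 0 3 : Lam n) = tn n from rfl,
    show (Lmat n 2 0 : Lam n) = 1 + tn n from rfl,
    show (Lmat n 2 2 : Lam n) = 2 from rfl,
    show (Lmat n 2 3 : Lam n) = 0 from rfl,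
    show (Lmat n 3 0 : Lam n) = tn n from rfl,
    show (Lmat n 3 2 : Lam n) = 0 from rfl,
    show (Lmat n 3 3 : Lam n) = 2 from rfl]
  have T00 : ip (sel n) ((1 + tn n + tn n ^ 2) * -((2:Lam n) * sel n)) = -(6 * m) := by
    have h00 : (1 + tn n + tn n ^ 2) * (-((2:Lam n) * sel n))
        = -((2:Lam n) * (sel n + (Xp n 1 * sel n + Xp n (-1) * sel n)
            + (Xp n 2 * sel n + (2:Lam n) * sel n + Xp n (-2) * sel n))) := by
      rw [tsq, tn]; ring
    rw [h00]
    simp only [ip_negR, ip_twoR, ip_addR]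
    rw [ip_s_s,
      ip_s_X_s_ne 1 (by norm_num) (by norm_num),
      ip_s_X_s_ne (-1) (by norm_num) (by norm_num),
      ip_s_X_s_ne 2 (by norm_num) (by norm_num),
      ip_s_X_s_ne (-2) (by norm_num) (by norm_num)]
    ring
  have T02 : ip (sel n) ((1 + tn n) * Nn n) = 3 * m := by
    have hN1 : (1 + tn n) * Nn n = Nn n + (Nn n + Nn n) := by
      rw [tn, add_mul, add_mul, one_mul, X_mul_N, X_mul_N]
    rw [hN1, ip_addR, ip_addR, ip_s_N]; ring
  have T03 : ip (sel n) (tn n * Nn n) = 2 * m := by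
    have hN2 : tn n * Nn n = Nn n + Nn n := by rw [tn, add_mul, X_mul_N, X_mul_N]
    rw [hN2, ip_addR, ip_s_N]; ring
  have T20 : ip (Nn n) ((1 + tn n) * -((2:Lam n) * sel n)) = -(6 * m) := by
    have hA : (1 + tn n) * (-((2:Lam n) * sel n))
        = -((2:Lam n) * (sel n + (Xp n 1 * sel n + Xp n (-1) * sel n))) := by
      rw [tn]; ring
    rw [hA, ip_negR, ip_twoR, ip_addR, ip_addR, ipN, ip_N_shift, ip_N_shift, eps_s]
    ring
  have T30 : ip (Nn n) (tn n * -((2:Lam n) * sel n)) = -(4 * m) := by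
    have hB : tn n * (-((2:Lam n) * sel n))
        = -((2:Lam n) * (Xp n 1 * sel n + Xp n (-1) * sel n)) := by
      rw [tn]; ring
    rw [hB, ip_negR, ip_twoR, ip_addR, ip_N_shift, ip_N_shift, eps_s]
    ring
  have T22 : ip (Nn n) ((2:Lam n) * Nn n) = 2 * (n : ℤ) := by
    rw [ip_twoR, ipN, eps_N]
  rw [T00, T02, T03, T20, T30, T22, zero_mul, ip_zeroR]
  ring

end Aux
namespace Aux
variable {n : ℕ} [NeZero n]

lemma master (v : Fin 4 → Lam n) :
    2 * Ln n v v =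
      ip ((1 + tn n) * v 0 + tn n * v 1 + (2:Lam n) * v 2)
         ((1 + tn n) * v 0 + tn n * v 1 + (2:Lam n) * v 2)
      + ip (tn n * v 0 + (1 + tn n) * v 1 + (2:Lam n) * v 3)
           (tn n * v 0 + (1 + tn n) * v 1 + (2:Lam n) * v 3)
      + ip (v 0) (v 0) + ip (v 1) (v 1) := by
  have hE : conj n ((1 + tn n) * v 0 + tn n * v 1 + (2:Lam n) * v 2)
        * ((1 + tn n) * v 0 + tn n * v 1 + (2:Lam n) * v 2)
      + conj n (tn n * v 0 + (1 + tn n) * v 1 + (2:Lam n) * v 3)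
        * (tn n * v 0 + (1 + tn n) * v 1 + (2:Lam n) * v 3)
      + conj n (v 0) * v 0 + conj n (v 1) * v 1
      = 2 * herm n v v := by
    unfold herm
    simp only [Fin.sum_univ_four]
    rw [show (Lmat n 0 0 : Lam n) = 1 + tn n + tn n ^ 2 from rfl,
      show (Lmat n 0 1 : Lam n) = tn n + tn n ^ 2 from rfl,
      show (Lmat n 0 2 : Lam n) = 1 + tn n from rfl,
      show (Lmat n 0 3 : Lam n) = tn n from rfl,
      show (Lmat n 1 0 : Lam n) = tn n + tn n ^ 2 from rfl,
      show (Lmat n 1 1 : Lam n) = 1 + tn n + tn n ^ 2 from rfl,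
      show (Lmat n 1 2 : Lam n) = tn n from rfl,
      show (Lmat n 1 3 : Lam n) = 1 + tn n from rfl,
      show (Lmat n 2 0 : Lam n) = 1 + tn n from rfl,
      show (Lmat n 2 1 : Lam n) = tn n from rfl,
      show (Lmat n 2 2 : Lam n) = 2 from rfl,
      show (Lmat n 2 3 : Lam n) = 0 from rfl,
      show (Lmat n 3 0 : Lam n) = tn n from rfl,
      show (Lmat n 3 1 : Lam n) = 1 + tn n from rfl,
      show (Lmat n 3 2 : Lam n) = 0 from rfl,
      show (Lmat n 3 3 : Lam n) = 2 from rfl]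
    simp only [conj_add, conj_mul, conj_one, conj_two, conj_t]
    ring
  have h0 := congrArg (fun h : Lam n => h 0) hE
  simp only [ladd] at h0
  rw [ipc, ipc, ipc, ipc, two_mul_apply] at h0
  rw [show Ln n v v = herm n v v 0 from rfl, ← h0]

lemma ip_self_nonneg (f : Lam n) : 0 ≤ ip f f :=
  Finset.sum_nonneg fun a _ => mul_self_nonneg _

lemma ip_self_eq_zero {f : Lam n} (h : ip f f = 0) : f = 0 := by
  have hz := (Finset.sum_eq_zero_iff_of_nonneg (fun a (_ : a ∈ Finset.univ) =>
    mul_self_nonneg (f a))).1 h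
  ext a
  exact mul_self_eq_zero.mp (hz a (Finset.mem_univ a))

lemma two_mul_eq_zero {f : Lam n} (h : (2:Lam n) * f = 0) : f = 0 := by
  ext a
  have h2 := congrArg (fun g : Lam n => g a) h
  simp only [two_mul_apply, lzero] at h2
  show f a = 0
  omega

lemma eps_one : eps (1 : Lam n) = 1 := by
  rw [show (1 : Lam n) = AddMonoidAlgebra.single 0 1 from rfl]
  simp [eps, Finsupp.single_apply]

lemma eps_zero : eps (0 : Lam n) = 0 := by simp [eps, lzero]

lemma Ln_char_pos (w : Fin 4 → Lam n) (hw : IsChar n w) : 0 < Ln n w w := by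
  have hM := master w
  have hA := ip_self_nonneg ((1 + tn n) * w 0 + tn n * w 1 + (2:Lam n) * w 2)
  have hB := ip_self_nonneg (tn n * w 0 + (1 + tn n) * w 1 + (2:Lam n) * w 3)
  have hC := ip_self_nonneg (w 0)
  have hD := ip_self_nonneg (w 1)
  rcases lt_or_ge 0 (Ln n w w) with h | h
  · exact h
  exfalso
  have hzero : Ln n w w = 0 := le_antisymm h (by linarith)
  rw [hzero, mul_zero] at hM
  have hC0 : ip (w 0) (w 0) = 0 := by linarith
  have hD0 : ip (w 1) (w 1) = 0 := by linarith
  have hw0 : w 0 = 0 := ip_self_eq_zero hC0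
  have hw1 : w 1 = 0 := ip_self_eq_zero hD0
  have hA0 : ip ((1 + tn n) * w 0 + tn n * w 1 + (2:Lam n) * w 2)
      ((1 + tn n) * w 0 + tn n * w 1 + (2:Lam n) * w 2) = 0 := by linarith
  have hB0 : ip (tn n * w 0 + (1 + tn n) * w 1 + (2:Lam n) * w 3)
      (tn n * w 0 + (1 + tn n) * w 1 + (2:Lam n) * w 3) = 0 := by linarith
  have hg1 : (1 + tn n) * w 0 + tn n * w 1 + (2:Lam n) * w 2 = (2:Lam n) * w 2 := by
    rw [hw0, hw1]; ring
  have hg2 : tn n * w 0 + (1 + tn n) * w 1 + (2:Lam n) * w 3 = (2:Lam n) * w 3 := by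
    rw [hw0, hw1]; ring
  rw [hg1] at hA0
  rw [hg2] at hB0
  have hw2 : w 2 = 0 := two_mul_eq_zero (ip_self_eq_zero hA0)
  have hw3 : w 3 = 0 := two_mul_eq_zero (ip_self_eq_zero hB0)
  have hLwe : Ln n w (ee n 0) = 0 := by
    rw [Ln_eq]
    simp only [Fin.sum_univ_four]
    have h0' : w 0 = 0 := hw0
    rw [hw0, hw1, hw2, hw3]
    simp only [ip_zeroL]
    ring
  have hchar := hw (ee n 0)
  have hodd := Ln_diag_mod (n := n) (ee n 0)
  have he0 : ee n 0 0 = 1 := Pi.single_eq_same 0 1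
  have he1 : (ee n 0) 1 = 0 := Pi.single_eq_of_ne (by decide) 1
  rw [he0, he1, eps_one, eps_zero] at hodd
  rw [hLwe] at hchar
  omega

end Aux

/-- The defect of the lattice `Vₙ = (ℤ⁴ⁿ, Lₙ)` satisfies `⌊n/3⌋ ≤ d(Vₙ) < n/2`:
there is a characteristic vector of norm `4n − 8⌊n/3⌋`, every characteristic vector
has positive norm (the form is odd), and any minimal characteristic vector `w`
satisfies `8⌊n/3⌋ ≤ 4n − |w|²` and `4n − |w|² < 4n`. -/
theorem stmt_12 (n : ℕ) (hn : 1 ≤ n) :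
    (∃ w : Fin 4 → Lam n, IsChar n w ∧ Ln n w w = 4 * n - 8 * (n / 3 : ℕ)) ∧
    (∀ w : Fin 4 → Lam n, IsChar n w → 0 < Ln n w w) ∧
    (∀ w : Fin 4 → Lam n, IsChar n w → (∀ u, IsChar n u → Ln n w w ≤ Ln n u u) →
      8 * ((n / 3 : ℕ) : ℤ) ≤ 4 * n - Ln n w w ∧ 4 * (n : ℤ) - Ln n w w < 4 * n) := by
  haveI : NeZero n := ⟨by omega⟩
  refine ⟨⟨w0 n, Aux.isChar_w0, Aux.Ln_w0_w0⟩, fun w hw => Aux.Ln_char_pos w hw, ?_⟩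
  intro w hw hmin
  constructor
  · have h1 := hmin (w0 n) Aux.isChar_w0
    rw [Aux.Ln_w0_w0] at h1
    linarith
  · have := Aux.Ln_char_pos w hw
    linarith

end
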